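/- For the NFA A_{π_1,...,π_k} (with pairwise coprime cycle lengths π_1 = 3, π_2, ..., π_k ≥ 3), every subset of the form P_1 ∪ ... ∪ P_k with ∅ ⊊ P_i ⊊ Q_i for all i is reachable from the initial subset {q̂} in the subset construction. -/

import Mathlib

/-- States of the NFA `A_{π_1,...,π_k}`: the initial state `q̂`, the cycle states
`q_{i,j}` (for `j < π i`), and the auxiliary states `r_{i,j}` (of which only those
with `1 ≤ j ≤ π i - 2` are used; the others have no transitions). -/
abbrev CycleState (k : ℕ) (π : Fin k → ℕ) : Type :=
  Unit ⊕ (Σ i : Fin k, Fin (π i)) ⊕ (Σ i : Fin k, Fin (π i))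

/-- The NFA `A_{π_1,...,π_k}` over the alphabet `Bool`, where `true` is the
symbol `a` and `false` is the symbol `b`. -/
def cycleNFA (k : ℕ) (π : Fin k → ℕ) (hπ : ∀ i, 0 < π i) :
    NFA Bool (CycleState k π) where
  start := {Sum.inl ()}
  accept := {Sum.inl ()}
  step := fun s c =>
    match s, c with
    | Sum.inl _, true => Set.range fun i : Fin k => Sum.inr (Sum.inl ⟨i, ⟨0, hπ i⟩⟩)
    | Sum.inl _, false => ∅
    | Sum.inr (Sum.inl ⟨i, j⟩), true =>
        {Sum.inr (Sum.inl ⟨i, ⟨(j.val + 1) % π i, Nat.mod_lt _ (hπ i)⟩⟩)}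
    | Sum.inr (Sum.inl ⟨i, j⟩), false =>
        if j.val = 0 then {Sum.inl ()}
        else if j.val ≤ π i - 2 then {Sum.inr (Sum.inr ⟨i, j⟩)} else ∅
    | Sum.inr (Sum.inr ⟨i, j⟩), true =>
        if 1 ≤ j.val ∧ j.val ≤ π i - 2 then
          {Sum.inr (Sum.inl ⟨i, ⟨(j.val + 1) % π i, Nat.mod_lt _ (hπ i)⟩⟩)}
        else ∅
    | Sum.inr (Sum.inr _), false => ∅

/-- The subset of states corresponding to `P_1 ∪ ... ∪ P_k`, where `P_i ⊆ Q_i`. -/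
def cycleSubset (k : ℕ) (π : Fin k → ℕ) (P : ∀ i : Fin k, Set (Fin (π i))) :
    Set (CycleState k π) :=
  {s | ∃ (i : Fin k) (j : Fin (π i)), j ∈ P i ∧ s = Sum.inr (Sum.inl ⟨i, j⟩)}

namespace CycleAux

/-- shift by `m` inside a cycle of length `n` -/
def shf {n : ℕ} (hn : 0 < n) (m : ℕ) (j : Fin n) : Fin n :=
  ⟨(j.val + m) % n, Nat.mod_lt _ hn⟩

lemma mod_small (x n : ℕ) (hn : 0 < n) (h : x < 2 * n) :
    x % n = if x < n then x else x - n := by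
  split
  · exact Nat.mod_eq_of_lt ‹_›
  · rw [Nat.mod_eq_sub_mod (le_of_not_gt ‹_›), Nat.mod_eq_of_lt (by omega)]

lemma shf_val {n} (hn : 0 < n) (m) (j : Fin n) : (shf hn m j).val = (j.val + m) % n := rfl

lemma shf_shf {n} (hn : 0 < n) (m m' : ℕ) (j : Fin n) :
    shf hn m' (shf hn m j) = shf hn (m + m') j := by
  apply Fin.ext
  simp only [shf, Nat.mod_add_mod]
  rw [Nat.add_assoc]

lemma shf_zero_mod {n} (hn : 0 < n) (m : ℕ) (h : m % n = 0) (j : Fin n) : shf hn m j = j := by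
  apply Fin.ext
  simp only [shf]
  simp [Nat.add_mod, h, Nat.mod_eq_of_lt j.isLt]

lemma shf_zero {n} (hn : 0 < n) (j : Fin n) : shf hn 0 j = j := by
  apply Fin.ext
  simp [shf, Nat.mod_eq_of_lt j.isLt]

lemma shf_injective {n} (hn : 0 < n) (m : ℕ) : Function.Injective (shf hn m) := by
  intro a b h
  have h' : (a.val + m) % n = (b.val + m) % n := congrArg Fin.val h
  have h2 : a.val % n = b.val % n := Nat.ModEq.add_right_cancel' m h'
  exact Fin.ext (by rwa [Nat.mod_eq_of_lt a.isLt, Nat.mod_eq_of_lt b.isLt] at h2)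

lemma sub_mod_add {n : ℕ} (hn : 0 < n) (t : ℕ) : (n - t % n + t) % n = 0 := by
  have h1 : t % n ≤ t := Nat.mod_le t n
  have h3 := Nat.div_add_mod t n
  have hr : t % n < n := Nat.mod_lt _ hn
  have h2 : n - t % n + t = n + n * (t / n) := by omega
  rw [h2, Nat.add_mul_mod_self_left, Nat.mod_self]

lemma exists_succ_not_mem {n : ℕ} (hn : 0 < n) {P : Set (Fin n)} (hne : P.Nonempty)
    (hp : P ≠ Set.univ) : ∃ p ∈ P, shf hn 1 p ∉ P := by
  by_contra h
  push_neg at h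
  obtain ⟨p₀, hp₀⟩ := hne
  have key : ∀ m : ℕ, shf hn m p₀ ∈ P := by
    intro m
    induction m with
    | zero => rwa [shf_zero]
    | succ m ih =>
      have := h _ ih
      rwa [shf_shf] at this
  apply hp
  ext q
  simp only [Set.mem_univ, iff_true]
  have hq := key (n - p₀.val + q.val)
  have e : shf hn (n - p₀.val + q.val) p₀ = q := by
    apply Fin.ext
    simp only [shf]
    have h1 : p₀.val + (n - p₀.val + q.val) = n + q.val := by
      have := p₀.isLt; omega
    rw [h1, Nat.add_comm n q.val, Nat.add_mod_right, Nat.mod_eq_of_lt q.isLt]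
  rwa [e] at hq

section Auto

variable {k : ℕ} {π : Fin k → ℕ} (hπ : ∀ i, 0 < π i)

lemma step_hat_true :
    (cycleNFA k π hπ).step (Sum.inl ()) true
      = Set.range fun i : Fin k => Sum.inr (Sum.inl ⟨i, ⟨0, hπ i⟩⟩) := rfl

lemma step_q_true (i : Fin k) (j : Fin (π i)) :
    (cycleNFA k π hπ).step (Sum.inr (Sum.inl ⟨i, j⟩)) true
      = {Sum.inr (Sum.inl ⟨i, shf (hπ i) 1 j⟩)} := rfl

lemma step_q_false (i : Fin k) (j : Fin (π i)) :
    (cycleNFA k π hπ).step (Sum.inr (Sum.inl ⟨i, j⟩)) false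
      = if j.val = 0 then {Sum.inl ()}
        else if j.val ≤ π i - 2 then {Sum.inr (Sum.inr ⟨i, j⟩)} else ∅ := rfl

lemma step_r_true (i : Fin k) (j : Fin (π i)) :
    (cycleNFA k π hπ).step (Sum.inr (Sum.inr ⟨i, j⟩)) true
      = if 1 ≤ j.val ∧ j.val ≤ π i - 2 then
          {Sum.inr (Sum.inl ⟨i, shf (hπ i) 1 j⟩)} else ∅ := rfl

lemma mem_cycleSubset {P : ∀ i : Fin k, Set (Fin (π i))} {i : Fin k} {j : Fin (π i)} :
    (Sum.inr (Sum.inl ⟨i, j⟩) : CycleState k π) ∈ cycleSubset k π P ↔ j ∈ P i := by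
  constructor
  · rintro ⟨i', j', hj', heq⟩
    simp only [Sum.inr.injEq, Sum.inl.injEq] at heq
    obtain ⟨rfl, h2⟩ := Sigma.mk.inj_iff.mp heq
    rwa [eq_of_heq h2]
  · intro hj
    exact ⟨i, j, hj, rfl⟩

lemma stepSet_true (P : ∀ i : Fin k, Set (Fin (π i))) :
    (cycleNFA k π hπ).stepSet (cycleSubset k π P) true
      = cycleSubset k π (fun i => shf (hπ i) 1 '' P i) := by
  ext s
  simp only [NFA.mem_stepSet, cycleSubset, Set.mem_setOf_eq]
  constructor
  · rintro ⟨t, ⟨i, j, hj, rfl⟩, hs⟩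
    rw [step_q_true, Set.mem_singleton_iff] at hs
    subst hs
    exact ⟨i, _, ⟨j, hj, rfl⟩, rfl⟩
  · rintro ⟨i, j', ⟨j, hj, rfl⟩, rfl⟩
    exact ⟨_, ⟨i, j, hj, rfl⟩, by rw [step_q_true]; rfl⟩

lemma evalFrom_append (S : Set (CycleState k π)) (w₁ w₂ : List Bool) :
    (cycleNFA k π hπ).evalFrom S (w₁ ++ w₂)
      = (cycleNFA k π hπ).evalFrom ((cycleNFA k π hπ).evalFrom S w₁) w₂ := by
  simp [NFA.evalFrom, List.foldl_append]

lemma evalFrom_replicate (t : ℕ) (P : ∀ i : Fin k, Set (Fin (π i))) :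
    (cycleNFA k π hπ).evalFrom (cycleSubset k π P) (List.replicate t true)
      = cycleSubset k π (fun i => shf (hπ i) t '' P i) := by
  induction t generalizing P with
  | zero =>
    simp only [List.replicate, NFA.evalFrom_nil]
    have h0 : (fun i => shf (hπ i) 0 '' P i) = P := by
      funext i
      ext x
      constructor
      · rintro ⟨y, hy, rfl⟩; rwa [shf_zero]
      · intro hx; exact ⟨x, hx, shf_zero _ _⟩
    rw [h0]
  | succ t ih =>
    rw [show List.replicate (t+1) true = true :: List.replicate t true from rfl]
    have h1 : (cycleNFA k π hπ).evalFrom (cycleSubset k π P) (true :: List.replicate t true)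
        = (cycleNFA k π hπ).evalFrom
            ((cycleNFA k π hπ).stepSet (cycleSubset k π P) true) (List.replicate t true) := rfl
    rw [h1, stepSet_true, ih]
    have h2 : (fun i => shf (hπ i) t '' (shf (hπ i) 1 '' P i))
        = fun i => shf (hπ i) (t + 1) '' P i := by
      funext i
      rw [← Set.image_comp]
      apply Set.image_congr
      intro x _
      simp only [Function.comp_apply]
      rw [shf_shf, Nat.add_comm]
    rw [h2]

lemma stepSet_start :
    (cycleNFA k π hπ).stepSet {Sum.inl ()} true
      = cycleSubset k π (fun i => {⟨0, hπ i⟩}) := by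
  ext s
  simp only [NFA.mem_stepSet, cycleSubset, Set.mem_setOf_eq, Set.mem_singleton_iff]
  constructor
  · rintro ⟨t, rfl, hs⟩
    rw [step_hat_true] at hs
    obtain ⟨i, rfl⟩ := hs
    exact ⟨i, _, rfl, rfl⟩
  · rintro ⟨i, j, rfl, rfl⟩
    exact ⟨Sum.inl (), rfl, by rw [step_hat_true]; exact ⟨i, rfl⟩⟩

lemma eval_ba (C : ∀ i : Fin k, Set (Fin (π i)))
    (hub : ∀ i, ∀ j ∈ C i, j.val ≤ π i - 2)
    (h0 : ∃ i, (⟨0, hπ i⟩ : Fin (π i)) ∈ C i) :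
    (cycleNFA k π hπ).evalFrom (cycleSubset k π C) [false, true]
      = cycleSubset k π (fun i =>
          insert ⟨0, hπ i⟩ (shf (hπ i) 1 '' {j | j ∈ C i ∧ 1 ≤ j.val})) := by
  have hmid : (cycleNFA k π hπ).stepSet (cycleSubset k π C) false
      = {Sum.inl ()} ∪ {s | ∃ (i : Fin k) (j : Fin (π i)),
          (j ∈ C i ∧ 1 ≤ j.val) ∧ s = Sum.inr (Sum.inr ⟨i, j⟩)} := by
    ext s
    simp only [NFA.mem_stepSet, Set.mem_union, Set.mem_setOf_eq, Set.mem_singleton_iff,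
      cycleSubset]
    constructor
    · rintro ⟨t, ⟨i, j, hj, rfl⟩, hs⟩
      rw [step_q_false] at hs
      by_cases hj0 : j.val = 0
      · rw [if_pos hj0, Set.mem_singleton_iff] at hs
        exact Or.inl hs
      · rw [if_neg hj0, if_pos (hub i j hj), Set.mem_singleton_iff] at hs
        exact Or.inr ⟨i, j, ⟨hj, by omega⟩, hs⟩
    · rintro (rfl | ⟨i, j, ⟨hj, hj1⟩, rfl⟩)
      · obtain ⟨i0, h00⟩ := h0
        refine ⟨_, ⟨i0, _, h00, rfl⟩, ?_⟩
        rw [step_q_false, if_pos rfl]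
        rfl
      · refine ⟨_, ⟨i, j, hj, rfl⟩, ?_⟩
        rw [step_q_false, if_neg (by omega), if_pos (hub i j hj)]
        rfl
  have hmid2 : (cycleNFA k π hπ).stepSet ({Sum.inl ()} ∪ {s | ∃ (i : Fin k) (j : Fin (π i)),
          (j ∈ C i ∧ 1 ≤ j.val) ∧ s = Sum.inr (Sum.inr ⟨i, j⟩)}) true
      = cycleSubset k π (fun i =>
          insert ⟨0, hπ i⟩ (shf (hπ i) 1 '' {j | j ∈ C i ∧ 1 ≤ j.val})) := by
    ext s
    simp only [NFA.mem_stepSet, Set.mem_union, Set.mem_setOf_eq, Set.mem_singleton_iff,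
      cycleSubset, Set.mem_insert_iff, Set.mem_image]
    constructor
    · rintro ⟨t, (rfl | ⟨i, j, ⟨hj, hj1⟩, rfl⟩), hs⟩
      · rw [step_hat_true] at hs
        obtain ⟨i, rfl⟩ := hs
        exact ⟨i, _, Or.inl rfl, rfl⟩
      · rw [step_r_true, if_pos ⟨hj1, hub i j hj⟩, Set.mem_singleton_iff] at hs
        subst hs
        exact ⟨i, _, Or.inr ⟨j, ⟨hj, hj1⟩, rfl⟩, rfl⟩
    · rintro ⟨i, j, (rfl | ⟨x, ⟨hx, hx1⟩, rfl⟩), rfl⟩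
      · exact ⟨Sum.inl (), Or.inl rfl, by rw [step_hat_true]; exact ⟨i, rfl⟩⟩
      · exact ⟨_, Or.inr ⟨i, x, ⟨hx, hx1⟩, rfl⟩,
          by rw [step_r_true, if_pos ⟨hx1, hub i x hx⟩]; rfl⟩
  show (cycleNFA k π hπ).stepSet ((cycleNFA k π hπ).stepSet (cycleSubset k π C) false) true = _
  rw [hmid, hmid2]

lemma crt (hpos : ∀ i, 0 < π i) (hcop : ∀ i j, i ≠ j → Nat.Coprime (π i) (π j))
    (p : ∀ i, Fin (π i)) :
    ∃ t : ℕ, ∀ i, t % π i = (p i).val := by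
  have pp : Set.Pairwise (Finset.univ : Finset (Fin k)) (Function.onFun Nat.Coprime π) :=
    fun i _ j _ hij => hcop i j hij
  obtain ⟨t, ht⟩ := Nat.chineseRemainderOfFinset (fun i => (p i).val) π Finset.univ
    (fun i _ => (hpos i).ne') pp
  refine ⟨t, fun i => ?_⟩
  have h : t % π i = (p i).val % π i := ht i (Finset.mem_univ i)
  rwa [Nat.mod_eq_of_lt (p i).isLt] at h


lemma reach (hk : 2 ≤ k) (hπ3 : ∀ i, 3 ≤ π i)
    (hcop : ∀ i j, i ≠ j → Nat.Coprime (π i) (π j)) :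
    ∀ N (P : ∀ i : Fin k, Set (Fin (π i))), (∀ i, (P i).Nonempty) → (∀ i, P i ≠ Set.univ) →
      (∑ i, (P i).ncard) ≤ N →
      ∃ w : List Bool, (cycleNFA k π hπ).eval w = cycleSubset k π P := by
  intro N
  induction N with
  | zero =>
    intro P hne _ hle
    exfalso
    have h1 : ∀ i, 1 ≤ (P i).ncard := fun i => (Set.ncard_pos (Set.toFinite _)).mpr (hne i)
    have hpos : (0:ℕ) < ∑ i, (P i).ncard :=
      lt_of_lt_of_le (h1 ⟨0, by omega⟩)
        (Finset.single_le_sum (f := fun i => (P i).ncard) (fun i _ => Nat.zero_le _)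
          (Finset.mem_univ (⟨0, by omega⟩ : Fin k)))
    omega
  | succ N ih =>
    intro P hne hproper hle
    have h1 : ∀ i, 1 ≤ (P i).ncard := fun i => (Set.ncard_pos (Set.toFinite _)).mpr (hne i)
    choose p hpmem hpsucc using fun i => exists_succ_not_mem (hπ i) (hne i) (hproper i)
    obtain ⟨t, ht⟩ := crt hπ hcop p
    by_cases hsing : ∀ i, (P i).ncard = 1
    · -- base case: all the `P i` are singletons; reach them by `a` then `a^t`
      have hPs : ∀ i, P i = {p i} := by
        intro i
        obtain ⟨a, ha⟩ := Set.ncard_eq_one.mp (hsing i)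
        have hpa : p i = a := by
          have := hpmem i
          rw [ha] at this
          exact this
        rw [ha, hpa]
      refine ⟨true :: List.replicate t true, ?_⟩
      have e0 : (cycleNFA k π hπ).eval (true :: List.replicate t true)
          = (cycleNFA k π hπ).evalFrom ((cycleNFA k π hπ).stepSet {Sum.inl ()} true)
              (List.replicate t true) := rfl
      rw [e0, stepSet_start, evalFrom_replicate]
      have hAB : (fun i => shf (hπ i) t '' {(⟨0, hπ i⟩ : Fin (π i))}) = P := by
        funext i
        rw [Set.image_singleton, hPs i]
        congr 1
        apply Fin.ext
        rw [shf_val, Nat.zero_add, ht i]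
      rw [hAB]
    · -- inductive step
      push_neg at hsing
      obtain ⟨i₂, hi₂⟩ := hsing
      set u : Fin k → ℕ := fun i => π i - t % π i with hu
      set P' : ∀ i : Fin k, Set (Fin (π i)) := fun i => shf (hπ i) (u i) '' P i with hP'
      have h0P' : ∀ i, (⟨0, hπ i⟩ : Fin (π i)) ∈ P' i := by
        intro i
        refine ⟨p i, hpmem i, ?_⟩
        apply Fin.ext
        rw [shf_val]
        simp only [hu]
        rw [ht i]
        have hlt := (p i).isLt
        have e : (p i).val + (π i - (p i).val) = π i := by omega
        rw [e, Nat.mod_self]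
      have h1P' : ∀ i, ∀ x ∈ P' i, x.val ≠ 1 := by
        intro i x hx hx1
        obtain ⟨j, hj, rfl⟩ := hx
        apply hpsucc i
        rw [shf_val] at hx1
        simp only [hu] at hx1
        rw [ht i] at hx1
        have hlt := (p i).isLt
        have hjlt := j.isLt
        have hj' : shf (hπ i) 1 (p i) = j := by
          apply Fin.ext
          rw [shf_val]
          rw [mod_small _ _ (hπ i) (by omega)] at hx1
          rw [mod_small _ _ (hπ i) (by omega)]
          split at hx1 <;> split <;> omega
        rwa [hj']
      set B : ∀ i : Fin k, Set (Fin (π i)) :=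
        fun i => shf (hπ i) (π i - 1) '' (P' i \ {⟨0, hπ i⟩}) with hB
      have hBval : ∀ i, ∀ x ∈ B i, 1 ≤ x.val ∧ x.val ≤ π i - 2 := by
        intro i x hx
        obtain ⟨j, ⟨hjP, hj0⟩, rfl⟩ := hx
        have hj0' : j.val ≠ 0 := fun h => hj0 (Fin.ext h)
        have hj1 : j.val ≠ 1 := h1P' i j hjP
        have hjlt := j.isLt
        have h3 := hπ3 i
        rw [shf_val, mod_small _ _ (hπ i) (by omega)]
        split <;> omega
      have hBsucc : ∀ i, shf (hπ i) 1 '' B i = P' i \ {⟨0, hπ i⟩} := by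
        intro i
        simp only [hB]
        rw [← Set.image_comp]
        have hcomp : (shf (hπ i) 1 ∘ shf (hπ i) (π i - 1)) = id := by
          funext x
          simp only [Function.comp_apply, id]
          rw [shf_shf]
          apply shf_zero_mod
          have h3 := hπ3 i
          have e : π i - 1 + 1 = π i := by omega
          rw [e, Nat.mod_self]
        rw [hcomp, Set.image_id]
      have hncP' : ∀ i, (P' i).ncard = (P i).ncard := by
        intro i
        simp only [hP']
        exact Set.ncard_image_of_injective _ (shf_injective _ _)
      have hncB : ∀ i, (B i).ncard = (P i).ncard - 1 := by
        intro i
        simp only [hB]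
        rw [Set.ncard_image_of_injective _ (shf_injective _ _),
          Set.ncard_diff_singleton_of_mem (h0P' i), hncP']
      have h0B : ∀ i, (⟨0, hπ i⟩ : Fin (π i)) ∉ B i := by
        intro i h
        simpa using (hBval i _ h).1
      have main : ∀ Z : Fin k → Prop, (∀ i, ¬ Z i → 2 ≤ (P i).ncard) → (∃ i, Z i) →
          (∃ i, ¬ Z i) → ∃ w : List Bool, (cycleNFA k π hπ).eval w = cycleSubset k π P := by
        intro Z hZ2 hZex hZnex
        obtain ⟨iZ, hiZ⟩ := hZex
        obtain ⟨iS, hiS⟩ := hZnex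
        classical
        set C : ∀ i : Fin k, Set (Fin (π i)) :=
          fun i => if Z i then insert ⟨0, hπ i⟩ (B i) else B i with hC
        have hBsubC : ∀ i, B i ⊆ C i := by
          intro i
          simp only [hC]
          split
          · exact Set.subset_insert _ _
          · exact le_refl _
        have hCub : ∀ i, ∀ x ∈ C i, x.val ≤ π i - 2 := by
          intro i x hx
          have h3 := hπ3 i
          simp only [hC] at hx
          by_cases hZi : Z i
          · rw [if_pos hZi] at hx
            rcases Set.mem_insert_iff.mp hx with rfl | hx
            · exact Nat.zero_le _
            · exact (hBval i _ hx).2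
          · rw [if_neg hZi] at hx
            exact (hBval i _ hx).2
        have hCne : ∀ i, (C i).Nonempty := by
          intro i
          simp only [hC]
          by_cases hZi : Z i
          · rw [if_pos hZi]
            exact ⟨_, Set.mem_insert _ _⟩
          · rw [if_neg hZi]
            have h2 := hZ2 i hZi
            apply Set.nonempty_of_ncard_ne_zero
            rw [hncB i]
            omega
        have hCpr : ∀ i, C i ≠ Set.univ := by
          intro i h
          have h3 := hπ3 i
          have hmem : (⟨π i - 1, by omega⟩ : Fin (π i)) ∈ C i := h ▸ Set.mem_univ _
          have hv : π i - 1 ≤ π i - 2 := hCub i _ hmem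
          omega
        have hncC : ∀ i, (C i).ncard ≤ (P i).ncard ∧ (¬ Z i → (C i).ncard < (P i).ncard) := by
          intro i
          simp only [hC]
          by_cases hZi : Z i
          · rw [if_pos hZi]
            rw [Set.ncard_insert_of_notMem (h0B i), hncB i]
            constructor
            · have := h1 i; omega
            · intro h; exact absurd hZi h
          · rw [if_neg hZi, hncB i]
            have := h1 i
            exact ⟨by omega, fun _ => by omega⟩
        have hsum : ∑ i, (C i).ncard < ∑ i, (P i).ncard :=
          Finset.sum_lt_sum (fun i _ => (hncC i).1)
            ⟨iS, Finset.mem_univ _, (hncC iS).2 hiS⟩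
        obtain ⟨w, hw⟩ := ih C hCne hCpr (by omega)
        refine ⟨w ++ ([false, true] ++ List.replicate t true), ?_⟩
        have h0C : (⟨0, hπ iZ⟩ : Fin (π iZ)) ∈ C iZ := by
          simp only [hC]
          rw [if_pos hiZ]
          exact Set.mem_insert _ _
        have e1 : (cycleNFA k π hπ).eval (w ++ ([false, true] ++ List.replicate t true))
            = (cycleNFA k π hπ).evalFrom ((cycleNFA k π hπ).eval w)
                ([false, true] ++ List.replicate t true) := evalFrom_append hπ _ _ _
        rw [e1, hw, evalFrom_append, eval_ba hπ C hCub ⟨iZ, h0C⟩]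
        have hD : (fun i => insert (⟨0, hπ i⟩ : Fin (π i))
            (shf (hπ i) 1 '' {j | j ∈ C i ∧ 1 ≤ j.val})) = P' := by
          funext i
          have hfil : {j : Fin (π i) | j ∈ C i ∧ 1 ≤ j.val} = B i := by
            ext x
            simp only [Set.mem_setOf_eq]
            constructor
            · rintro ⟨hx, hx1⟩
              simp only [hC] at hx
              by_cases hZi : Z i
              · rw [if_pos hZi] at hx
                rcases Set.mem_insert_iff.mp hx with rfl | hx
                · simp at hx1
                · exact hx
              · rw [if_neg hZi] at hx
                exact hx
            · intro hx
              exact ⟨hBsubC i hx, (hBval i x hx).1⟩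
          rw [hfil, hBsucc i, Set.insert_diff_singleton,
            Set.insert_eq_self.mpr (h0P' i)]
        rw [hD, evalFrom_replicate]
        have hfin : (fun i => shf (hπ i) t '' P' i) = P := by
          funext i
          simp only [hP']
          rw [← Set.image_comp]
          have hcomp : (shf (hπ i) t ∘ shf (hπ i) (u i)) = id := by
            funext x
            simp only [Function.comp_apply, id]
            rw [shf_shf]
            apply shf_zero_mod
            exact sub_mod_add (hπ i) t
          rw [hcomp, Set.image_id]
        rw [hfin]
      by_cases hex : ∃ i, (P i).ncard = 1
      · obtain ⟨i₁, hi₁⟩ := hex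
        exact main (fun i => (P i).ncard = 1)
          (fun i h => by have := h1 i; omega) ⟨i₁, hi₁⟩ ⟨i₂, hi₂⟩
      · push_neg at hex
        haveI : Nontrivial (Fin k) := Fin.nontrivial_iff_two_le.mpr hk
        obtain ⟨i', hi'⟩ := exists_ne i₂
        exact main (fun i => i = i₂)
          (fun i _ => by have := h1 i; have := hex i; omega) ⟨i₂, rfl⟩ ⟨i', hi'⟩

end Auto

end CycleAux

theorem cycle_subsets_reachable (k : ℕ) (hk : 2 ≤ k) (π : Fin k → ℕ)
    (hπ3 : ∀ i, 3 ≤ π i) (hπ1 : ∀ h : 0 < k, π ⟨0, h⟩ = 3)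
    (hcop : ∀ i j, i ≠ j → Nat.Coprime (π i) (π j))
    (hπ : ∀ i, 0 < π i)
    (P : ∀ i : Fin k, Set (Fin (π i)))
    (hne : ∀ i, (P i).Nonempty) (hproper : ∀ i, P i ≠ Set.univ) :
    ∃ w : List Bool, (cycleNFA k π hπ).eval w = cycleSubset k π P :=
  CycleAux.reach hπ hk hπ3 hcop (∑ i, (P i).ncard) P hne hproper le_rfl
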